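/- For a symmetric PSD matrix L and the associated marginal kernel K = (L+I)^{-1}L, the singleton marginal of the L-ensemble matches K: ∑_{A ⊆ Y, i ∈ A} det(L_A)/det(L+I) = K_{i,i} for every index i. -/

import Mathlib

open Matrix BigOperators

/-- Principal submatrix of `L` indexed by a finset `A`. -/
def principalSubmatrix {N : ℕ} {R : Type*} (L : Matrix (Fin N) (Fin N) R)
    (A : Finset (Fin N)) : Matrix A A R :=
  L.submatrix (fun i : A => (i : Fin N)) (fun j : A => (j : Fin N))

/-- The blockwise piecewise matrix has determinant the principal minor. -/
lemma det_piecewise_one {N : ℕ} (L : Matrix (Fin N) (Fin N) ℝ) (A : Finset (Fin N)) :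
    (Matrix.of (A.piecewise L (1 : Matrix (Fin N) (Fin N) ℝ))).det = (principalSubmatrix L A).det := by
  classical
  let e : {x : Fin N // x ∈ A} ⊕ {x : Fin N // ¬ x ∈ A} ≃ Fin N := Equiv.sumCompl (· ∈ A)
  rw [← Matrix.det_submatrix_equiv_self e]
  have h : (Matrix.of (A.piecewise L (1 : Matrix (Fin N) (Fin N) ℝ))).submatrix e e =
      Matrix.fromBlocks (principalSubmatrix L A)
        (Matrix.of fun (p : {x : Fin N // x ∈ A}) (q : {x : Fin N // ¬ x ∈ A}) => L p q)
        0 1 := by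
    ext p q
    cases p with
    | inl p =>
      cases q with
      | inl q =>
        simp [e, Finset.piecewise, p.2, principalSubmatrix]
      | inr q =>
        simp [e, Finset.piecewise, p.2]
    | inr p =>
      cases q with
      | inl q =>
        have hpq : (p : Fin N) ≠ (q : Fin N) := by
          intro h; exact p.2 (h ▸ q.2)
        simp [e, Finset.piecewise, p.2, Matrix.one_apply, hpq]
      | inr q =>
        have hpq : ((p : Fin N) = (q : Fin N)) ↔ p = q := Subtype.coe_injective.eq_iff
        simp [e, Finset.piecewise, p.2, Matrix.one_apply, hpq]
  rw [h, Matrix.det_fromBlocks_zero₂₁, Matrix.det_one, mul_one]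

lemma det_add_one_expand {N : ℕ} (M : Matrix (Fin N) (Fin N) ℝ) :
    (M + 1).det = ∑ A : Finset (Fin N),
      (Matrix.of (A.piecewise M (1 : Matrix (Fin N) (Fin N) ℝ))).det := by
  classical
  have := (Matrix.detRowAlternating :
      (Fin N → ℝ) [⋀^Fin N]→ₗ[ℝ] ℝ).toMultilinearMap.map_add_univ
      (M : Fin N → Fin N → ℝ) (1 : Matrix (Fin N) (Fin N) ℝ)
  exact this

theorem L_ensemble_singleton_marginal {N : ℕ}
    (L : Matrix (Fin N) (Fin N) ℝ) (hL : L.PosSemidef) (i : Fin N) :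
    ∑ A ∈ Finset.univ.filter (fun A : Finset (Fin N) => i ∈ A),
        (principalSubmatrix L A).det / (L + 1).det = ((L + 1)⁻¹ * L) i i := by
  classical
  have hpd : (L + 1).PosDef := Matrix.PosDef.posSemidef_add hL Matrix.PosDef.one
  have hD : (0 : ℝ) < (L + 1).det := hpd.det_pos
  set D := (L + 1).det with hDdef
  -- total sum
  have htot : ∑ A : Finset (Fin N), (principalSubmatrix L A).det = D := by
    rw [hDdef, det_add_one_expand L]
    exact Finset.sum_congr rfl fun A _ => (det_piecewise_one L A).symm
  -- adjugate diagonal entry = sum over subsets not containing i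
  have hadj : (L + 1).adjugate i i =
      ∑ A ∈ Finset.univ.filter (fun A : Finset (Fin N) => ¬ i ∈ A),
        (principalSubmatrix L A).det := by
    rw [Matrix.adjugate_apply]
    have hrow : (L + 1).updateRow i (Pi.single i 1) =
        Matrix.of (Function.update L i 0) + 1 := by
      ext r c
      by_cases hr : r = i
      · subst hr
        simp [Matrix.updateRow_apply, Matrix.one_apply, Pi.single_apply, eq_comm,
          Matrix.add_apply, Function.update_self, Function.update]
      · simp [Matrix.updateRow_apply, hr, Matrix.add_apply, Function.update_of_ne hr, Function.update]
    rw [hrow, det_add_one_expand]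
    rw [← Finset.sum_filter_add_sum_filter_not Finset.univ
      (fun A : Finset (Fin N) => i ∈ A)]
    have h1 : ∑ A ∈ Finset.univ.filter (fun A : Finset (Fin N) => i ∈ A),
        (Matrix.of (A.piecewise (Matrix.of (Function.update L i 0)) (1 : Matrix (Fin N) (Fin N) ℝ))).det = 0 := by
      apply Finset.sum_eq_zero
      intro A hA
      rw [Finset.mem_filter] at hA
      apply Matrix.det_eq_zero_of_row_eq_zero i
      intro j
      simp [Finset.piecewise, hA.2, Function.update_self, Function.update]
    have h2 : ∀ A ∈ Finset.univ.filter (fun A : Finset (Fin N) => ¬ i ∈ A),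
        (Matrix.of (A.piecewise (Matrix.of (Function.update L i 0)) (1 : Matrix (Fin N) (Fin N) ℝ))).det =
        (principalSubmatrix L A).det := by
      intro A hA
      rw [Finset.mem_filter] at hA
      rw [← det_piecewise_one L A]
      congr 1
      ext r c
      by_cases hr : r ∈ A
      · have : r ≠ i := fun h => hA.2 (h ▸ hr)
        simp [Finset.piecewise, hr, Function.update_of_ne this, Function.update, this]
      · simp [Finset.piecewise, hr]
    rw [h1, zero_add, Finset.sum_congr rfl h2]
  -- sum over subsets containing i
  have hsplit : ∑ A ∈ Finset.univ.filter (fun A : Finset (Fin N) => i ∈ A),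
      (principalSubmatrix L A).det = D - (L + 1).adjugate i i := by
    rw [hadj, eq_sub_iff_add_eq, ← htot,
      Finset.sum_filter_add_sum_filter_not Finset.univ
        (fun A : Finset (Fin N) => i ∈ A)]
  -- RHS computation
  have hinv : (L + 1)⁻¹ * (L + 1) = 1 :=
    Matrix.nonsing_inv_mul _ hD.ne'.isUnit
  have hRHS : ((L + 1)⁻¹ * L) i i = 1 - (L + 1)⁻¹ i i := by
    have : (L + 1)⁻¹ * L = 1 - (L + 1)⁻¹ := by
      have : (L + 1)⁻¹ * L = (L + 1)⁻¹ * (L + 1) - (L + 1)⁻¹ * 1 := by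
        rw [← Matrix.mul_sub, add_sub_cancel_right]
      rw [this, hinv, Matrix.mul_one]
    rw [this, Matrix.sub_apply, Matrix.one_apply_eq]
  have hinvii : (L + 1)⁻¹ i i = (L + 1).adjugate i i / D := by
    rw [Matrix.inv_def, Matrix.smul_apply, smul_eq_mul, Ring.inverse_eq_inv, ← hDdef]
    ring
  rw [← Finset.sum_div, hsplit, hRHS, hinvii]
  field_simp
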